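/- Let p be an odd prime. The groups M₁(p,d,e,f) with (1 ≤ d ≤ f ≤ e ≤ d+f or 1 ≤ f < d < e ≤ d+f), M₂(p,d,e,f) with 1 ≤ f < d < e, and M₃(p,d,e,h,f) with h − d ≤ f < d < h < e are pairwise non-isomorphic: two groups from this list are isomorphic only if they belong to the same family and have identical parameter tuples. -/

import Mathlib

/-- Relators for the group `M₁(p,d,e,f) = ⟨a, b ∣ a^(p^e) = b^(p^d) = 1, b⁻¹ab = a^(1+p^f)⟩`,
where `a` is generator `0` and `b` is generator `1`. -/
def M1rels (p d e f : ℕ) : Set (FreeGroup (Fin 2)) :=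
  {FreeGroup.of 0 ^ p ^ e, FreeGroup.of 1 ^ p ^ d,
    (FreeGroup.of 1)⁻¹ * FreeGroup.of 0 * FreeGroup.of 1 * (FreeGroup.of 0 ^ (1 + p ^ f))⁻¹}

/-- The metacyclic group `M₁(p,d,e,f) = ⟨a, b ∣ a^(p^e) = b^(p^d) = 1, b⁻¹ab = a^(1+p^f)⟩`. -/
abbrev M1 (p d e f : ℕ) : Type := PresentedGroup (M1rels p d e f)

/-- The canonical generator `a` of `M₁(p,d,e,f)`. -/
def M1a (p d e f : ℕ) : M1 p d e f := PresentedGroup.of 0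

/-- The canonical generator `b` of `M₁(p,d,e,f)`. -/
def M1b (p d e f : ℕ) : M1 p d e f := PresentedGroup.of 1

/-- Relators for the group `M₂(p,d,e,f) = ⟨a, b ∣ a^(p^d) = b^(p^e) = 1, b⁻¹ab = a^(1+p^f)⟩`,
where `a` is generator `0` and `b` is generator `1`. -/
def M2rels (p d e f : ℕ) : Set (FreeGroup (Fin 2)) :=
  {FreeGroup.of 0 ^ p ^ d, FreeGroup.of 1 ^ p ^ e,
    (FreeGroup.of 1)⁻¹ * FreeGroup.of 0 * FreeGroup.of 1 * (FreeGroup.of 0 ^ (1 + p ^ f))⁻¹}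

/-- The metacyclic group `M₂(p,d,e,f) = ⟨a, b ∣ a^(p^d) = b^(p^e) = 1, b⁻¹ab = a^(1+p^f)⟩`. -/
abbrev M2 (p d e f : ℕ) : Type := PresentedGroup (M2rels p d e f)

/-- The canonical generator `a` of `M₂(p,d,e,f)`. -/
def M2a (p d e f : ℕ) : M2 p d e f := PresentedGroup.of 0

/-- The canonical generator `b` of `M₂(p,d,e,f)`. -/
def M2b (p d e f : ℕ) : M2 p d e f := PresentedGroup.of 1

/-- Relators for the group
`M₃(p,d,e,h,f) = ⟨a, b ∣ a^(p^h) = 1, b^(p^(d+e-h)) = a^(p^d), b⁻¹ab = a^(1+p^f)⟩`,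
where `a` is generator `0` and `b` is generator `1`. -/
def M3rels (p d e h f : ℕ) : Set (FreeGroup (Fin 2)) :=
  {FreeGroup.of 0 ^ p ^ h, FreeGroup.of 1 ^ p ^ (d + e - h) * (FreeGroup.of 0 ^ p ^ d)⁻¹,
    (FreeGroup.of 1)⁻¹ * FreeGroup.of 0 * FreeGroup.of 1 * (FreeGroup.of 0 ^ (1 + p ^ f))⁻¹}

/-- The non-split metacyclic group
`M₃(p,d,e,h,f) = ⟨a, b ∣ a^(p^h) = 1, b^(p^(d+e-h)) = a^(p^d), b⁻¹ab = a^(1+p^f)⟩`. -/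
abbrev M3 (p d e h f : ℕ) : Type := PresentedGroup (M3rels p d e h f)

/-- The canonical generator `a` of `M₃(p,d,e,h,f)`. -/
def M3a (p d e h f : ℕ) : M3 p d e h f := PresentedGroup.of 0

/-- The canonical generator `b` of `M₃(p,d,e,h,f)`. -/
def M3b (p d e h f : ℕ) : M3 p d e h f := PresentedGroup.of 1

/-- `(α, β)` is an exact `(m,n)`-bicyclic pair of `G`: `α` has order `m`, `β` has order `n`,
`⟨α⟩ ∩ ⟨β⟩ = 1`, and `G = ⟨α⟩⟨β⟩`. -/
def IsExactBicyclicPair {G : Type*} [Group G] (m n : ℕ) (α β : G) : Prop :=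
  orderOf α = m ∧ orderOf β = n ∧
    Subgroup.zpowers α ⊓ Subgroup.zpowers β = ⊥ ∧
    ∀ g : G, ∃ i j : ℤ, g = α ^ i * β ^ j

/-- Parameter conditions for the family `M₁`. -/
def Cond1 (d e f : ℕ) : Prop :=
  (1 ≤ d ∧ d ≤ f ∧ f ≤ e ∧ e ≤ d + f) ∨ (1 ≤ f ∧ f < d ∧ d < e ∧ e ≤ d + f)

/-- Parameter conditions for the family `M₂`. -/
def Cond2 (d e f : ℕ) : Prop := 1 ≤ f ∧ f < d ∧ d < e

/-- Parameter conditions for the family `M₃`. -/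
def Cond3 (d e h f : ℕ) : Prop := h - d ≤ f ∧ f < d ∧ d < h ∧ h < e



section NT

lemma geom_split (u : ℤ) (m n : ℕ) :
    ∑ k ∈ Finset.range (m * n), u ^ k =
      (∑ i ∈ Finset.range m, u ^ i) * (∑ j ∈ Finset.range n, (u ^ m) ^ j) := by
  induction n with
  | zero => simp
  | succ n ih =>
    rw [Nat.mul_succ, Finset.sum_range_add, ih, Finset.sum_range_succ, mul_add]
    congr 1
    rw [Finset.sum_mul]
    refine Finset.sum_congr rfl fun k hk => ?_
    rw [← pow_mul, ← pow_add, mul_comm m n, add_comm]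

lemma dvd_geom_sum (p : ℕ) (u : ℤ) (hu : (p : ℤ) ∣ u - 1) (e : ℕ) :
    (p : ℤ) ^ e ∣ ∑ k ∈ Finset.range (p ^ e), u ^ k := by
  induction e with
  | zero => simp
  | succ e ih =>
    have hr : p ^ (e + 1) = p ^ e * p := pow_succ p e
    rw [hr, geom_split, pow_succ]
    refine mul_dvd_mul ih ?_
    have h2 : (∑ j ∈ Finset.range p, (u ^ p ^ e) ^ j) - p
        = ∑ j ∈ Finset.range p, ((u ^ p ^ e) ^ j - 1) := by
      rw [Finset.sum_sub_distrib]; simp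
    have h3 : (p:ℤ) ∣ (∑ j ∈ Finset.range p, (u ^ p ^ e) ^ j) - p := by
      rw [h2]
      refine Finset.dvd_sum fun j _ => ?_
      calc (p:ℤ) ∣ u - 1 := hu
        _ ∣ u ^ (p ^ e * j) - 1 := by
            simpa using sub_dvd_pow_sub_pow u 1 (p ^ e * j)
        _ = (u ^ p ^ e) ^ j - 1 := by rw [pow_mul]
    obtain ⟨t, ht⟩ := h3
    exact ⟨t + 1, by linarith⟩

lemma dvd_pow_sub_one (p : ℕ) (u : ℤ) (hu : (p : ℤ) ∣ u - 1) (e : ℕ) :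
    (p : ℤ) ^ e * (u - 1) ∣ u ^ p ^ e - 1 := by
  obtain ⟨t, ht⟩ := dvd_geom_sum p u hu e
  exact ⟨t, by rw [← geom_sum_mul, ht]; ring⟩

end NT

/-- Model group carrier: pairs `(i, j)` representing `a^i b^j`. -/
def Mdl (P Q K : ℕ) (r : ZMod P) : Type := ZMod P × ZMod Q

namespace Mdl

variable {P Q K : ℕ} {r : ZMod P}

/-- constructor -/
def mk' (i : ZMod P) (j : ZMod Q) : Mdl P Q K r := (i, j)

lemma mk'_inj {i i' : ZMod P} {j j' : ZMod Q} :
    (mk' i j : Mdl P Q K r) = mk' i' j' ↔ i = i' ∧ j = j' := Prod.ext_iff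

lemma eq_mk' (x : Mdl P Q K r) : x = mk' x.1 x.2 := rfl

instance : One (Mdl P Q K r) := ⟨((0 : ZMod P), (0 : ZMod Q))⟩

instance : Mul (Mdl P Q K r) :=
  ⟨fun x y => (x.1 + r ^ x.2.val * y.1 + ((K * ((x.2.val + y.2.val) / Q) : ℕ) : ZMod P),
    x.2 + y.2)⟩

instance : Inv (Mdl P Q K r) :=
  ⟨fun x => (-(r ^ (-x.2).val * x.1 + ((K * (((-x.2).val + x.2.val) / Q) : ℕ) : ZMod P)),
    -x.2)⟩

lemma mul_def (i i' : ZMod P) (j j' : ZMod Q) :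
    (mk' i j : Mdl P Q K r) * mk' i' j' =
      mk' (i + r ^ j.val * i' + ((K * ((j.val + j'.val) / Q) : ℕ) : ZMod P)) (j + j') := rfl

lemma inv_def (i : ZMod P) (j : ZMod Q) :
    (mk' i j : Mdl P Q K r)⁻¹ =
      mk' (-(r ^ (-j).val * i + ((K * (((-j).val + j.val) / Q) : ℕ) : ZMod P))) (-j) := rfl

lemma one_def : (1 : Mdl P Q K r) = mk' 0 0 := rfl

lemma div_helper {Q : ℕ} (hQ : 0 < Q) (m j : ℕ) :
    m / Q + (m % Q + j) / Q = (m + j) / Q := by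
  conv_rhs => rw [← Nat.div_add_mod m Q]
  rw [add_assoc, Nat.mul_add_div hQ]

section withhyp

variable [NeZero P] [NeZero Q]
variable (hr : r ^ Q = 1) (hK : ((K : ℕ) : ZMod P) * (r - 1) = 0)

include hr in
lemma r_pow_mod (m : ℕ) : r ^ (m % Q) = r ^ m := by
  conv_rhs => rw [← Nat.div_add_mod m Q]
  rw [pow_add, pow_mul, hr, one_pow, one_mul]

include hK in
lemma r_pow_K (t : ℕ) : r ^ t * (K : ZMod P) = (K : ZMod P) := by
  induction t with
  | zero => rw [pow_zero, one_mul]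
  | succ t ih => rw [pow_succ, mul_assoc]; nth_rewrite 1 [show r * (K : ZMod P) = K by
      linear_combination hK]; exact ih

include hK in
lemma K_mul_r_pow (t : ℕ) (c : ℕ) :
    r ^ t * ((K * c : ℕ) : ZMod P) = ((K * c : ℕ) : ZMod P) := by
  push_cast
  calc r ^ t * ((K : ZMod P) * c) = (r ^ t * K) * c := by ring
    _ = (K : ZMod P) * c := by rw [r_pow_K hK]

include hr hK in
lemma mul_assoc' (x y z : Mdl P Q K r) : x * y * z = x * (y * z) := by
  obtain ⟨x1, x2⟩ := x; obtain ⟨y1, y2⟩ := y; obtain ⟨z1, z2⟩ := z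
  have hQ : 0 < Q := Nat.pos_of_ne_zero (NeZero.ne Q)
  show (mk' x1 x2 * mk' y1 y2 : Mdl P Q K r) * mk' z1 z2 = mk' x1 x2 * (mk' y1 y2 * mk' z1 z2)
  rw [mul_def, mul_def, mul_def, mul_def, mk'_inj]
  constructor
  · have hval : (x2 + y2).val = (x2.val + y2.val) % Q := ZMod.val_add x2 y2
    have hval2 : (y2 + z2).val = (y2.val + z2.val) % Q := ZMod.val_add y2 z2
    rw [hval, hval2, r_pow_mod hr]
    rw [mul_add, mul_add, K_mul_r_pow hK, pow_add]
    have harith1 : (x2.val + y2.val) / Q + ((x2.val + y2.val) % Q + z2.val) / Q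
        = (x2.val + y2.val + z2.val) / Q := div_helper hQ _ _
    have harith2 : (y2.val + z2.val) / Q + ((y2.val + z2.val) % Q + x2.val) / Q
        = (y2.val + z2.val + x2.val) / Q := div_helper hQ _ _
    have hc1 : ((K * ((x2.val + y2.val) / Q) : ℕ) : ZMod P)
          + ((K * (((x2.val + y2.val) % Q + z2.val) / Q) : ℕ) : ZMod P)
        = ((K * ((x2.val + y2.val + z2.val) / Q) : ℕ) : ZMod P) := by
      rw [← Nat.cast_add, ← Nat.mul_add, harith1]
    have hc2 : ((K * ((y2.val + z2.val) / Q) : ℕ) : ZMod P)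
          + ((K * ((x2.val + (y2.val + z2.val) % Q) / Q) : ℕ) : ZMod P)
        = ((K * ((x2.val + y2.val + z2.val) / Q) : ℕ) : ZMod P) := by
      rw [← Nat.cast_add, ← Nat.mul_add]
      rw [show x2.val + (y2.val + z2.val) % Q = (y2.val + z2.val) % Q + x2.val by ring,
        harith2]
      rw [show y2.val + z2.val + x2.val = x2.val + y2.val + z2.val by ring]
    linear_combination hc1 - hc2
  · exact add_assoc x2 y2 z2

include hr hK in
lemma one_mul' (x : Mdl P Q K r) : 1 * x = x := by
  obtain ⟨x1, x2⟩ := x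
  show (mk' 0 0 : Mdl P Q K r) * mk' x1 x2 = mk' x1 x2
  rw [mul_def, mk'_inj]
  refine ⟨?_, zero_add x2⟩
  rw [ZMod.val_zero, pow_zero, one_mul, zero_add]
  rw [Nat.div_eq_of_lt (by simpa using x2.val_lt), Nat.mul_zero, Nat.cast_zero, add_zero]

include hr hK in
lemma inv_mul' (x : Mdl P Q K r) : x⁻¹ * x = 1 := by
  obtain ⟨x1, x2⟩ := x
  show (mk' x1 x2 : Mdl P Q K r)⁻¹ * mk' x1 x2 = 1
  rw [inv_def, mul_def, one_def, mk'_inj]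
  exact ⟨by ring, neg_add_cancel x2⟩

/-- the group structure on the model -/
def grp : Group (Mdl P Q K r) :=
  Group.ofLeftAxioms (mul_assoc' hr hK) (one_mul' hr hK) (inv_mul' hr hK)

end withhyp

variable [NeZero P] [NeZero Q] [hrf : Fact (r ^ Q = 1)]
  [hKf : Fact (((K : ℕ) : ZMod P) * (r - 1) = 0)]

instance instGroup : Group (Mdl P Q K r) := grp hrf.out hKf.out

/-- generator a -/
def A : Mdl P Q K r := mk' 1 0

/-- generator b -/
def B : Mdl P Q K r := mk' 0 1

lemma pow_def (i : ZMod P) (j : ZMod Q) (n : ℕ) :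
    (mk' i j : Mdl P Q K r) ^ n =
      mk' (i * ∑ k ∈ Finset.range n, r ^ (k * j.val) + ((K * (n * j.val / Q) : ℕ) : ZMod P))
        ((n * j.val : ℕ) : ZMod Q) := by
  have hQ : 0 < Q := Nat.pos_of_ne_zero (NeZero.ne Q)
  induction n with
  | zero => simp [one_def]; rfl
  | succ n ih =>
    rw [pow_succ, ih]; erw [mul_def]; rw [mk'_inj]
    constructor
    · rw [ZMod.val_natCast, r_pow_mod hrf.out, Finset.sum_range_succ, mul_add]
      have harith : K * (n * j.val / Q) + K * ((n * j.val % Q + j.val) / Q)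
          = K * ((n + 1) * j.val / Q) := by
        rw [← Nat.mul_add, div_helper hQ, add_one_mul]
      have hc : ((K * (n * j.val / Q) : ℕ) : ZMod P)
            + ((K * ((n * j.val % Q + j.val) / Q) : ℕ) : ZMod P)
          = ((K * ((n + 1) * j.val / Q) : ℕ) : ZMod P) := by
        rw [← Nat.cast_add, harith]
      linear_combination hc
    · push_cast
      simp only [ZMod.natCast_val, ZMod.cast_id]
      ring

lemma A_pow (n : ℕ) : (A : Mdl P Q K r) ^ n = mk' (n : ZMod P) 0 := by
  rw [A, pow_def, mk'_inj]
  constructor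
  · simp
  · simp

lemma B_pow [hQ1 : Fact (1 < Q)] (n : ℕ) :
    (B : Mdl P Q K r) ^ n = mk' ((K * (n / Q) : ℕ) : ZMod P) ((n : ℕ) : ZMod Q) := by
  rw [B, pow_def, mk'_inj, ZMod.val_one]
  constructor
  · simp
  · simp

lemma mk'_eq (i : ZMod P) (j : ZMod Q) [hQ1 : Fact (1 < Q)] :
    (mk' i j : Mdl P Q K r) = A ^ i.val * B ^ j.val := by
  have h0 : ((j.val : ℕ) : ZMod Q) = j := by rw [ZMod.natCast_val, ZMod.cast_id]
  have hjq : j.val / Q = 0 := Nat.div_eq_of_lt j.val_lt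
  rw [A_pow, B_pow, hjq, Nat.mul_zero, Nat.cast_zero, h0, mul_def, mk'_inj]
  constructor
  · simp [ZMod.val_zero, Nat.div_eq_of_lt j.val_lt, ZMod.natCast_val, ZMod.cast_id]
  · rw [zero_add]

lemma card_eq : Nat.card (Mdl P Q K r) = P * Q := by
  have : Nat.card (Mdl P Q K r) = Nat.card (ZMod P × ZMod Q) := rfl
  rw [this, Nat.card_prod, Nat.card_zmod, Nat.card_zmod]

instance : Finite (Mdl P Q K r) := by
  have : Finite (ZMod P × ZMod Q) := inferInstance
  exact this

lemma closure_AB [hQ1 : Fact (1 < Q)] :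
    Subgroup.closure ({A, B} : Set (Mdl P Q K r)) = ⊤ := by
  rw [eq_top_iff]
  rintro x -
  rw [eq_mk' x, mk'_eq]
  exact mul_mem (pow_mem (Subgroup.subset_closure (by simp)) _)
    (pow_mem (Subgroup.subset_closure (by simp)) _)

lemma A_pow_eq_one_iff (n : ℕ) : (A : Mdl P Q K r) ^ n = 1 ↔ P ∣ n := by
  rw [A_pow, one_def, mk'_inj]
  simp [ZMod.natCast_eq_zero_iff]

lemma B_pow_eq_one_iff [hQ1 : Fact (1 < Q)] (n : ℕ) :
    (B : Mdl P Q K r) ^ n = 1 ↔ Q ∣ n ∧ P ∣ K * (n / Q) := by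
  rw [B_pow, one_def, mk'_inj]
  rw [ZMod.natCast_eq_zero_iff, ZMod.natCast_eq_zero_iff]
  tauto

lemma pow_eq_one (n : ℕ) (hQn : Q ∣ n)
    (hsum : ∀ j₀ : ℕ, (∑ k ∈ Finset.range n, r ^ (k * j₀)) = 0)
    (hcarry : ∀ j₀ : ℕ, j₀ < Q → ((K * (n * j₀ / Q) : ℕ) : ZMod P) = 0)
    (g : Mdl P Q K r) : g ^ n = 1 := by
  obtain ⟨i, j⟩ := g
  show (mk' i j : Mdl P Q K r) ^ n = 1
  rw [pow_def, one_def, mk'_inj, hsum j.val, hcarry j.val j.val_lt]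
  refine ⟨by simp, ?_⟩
  rw [ZMod.natCast_eq_zero_iff]
  exact Dvd.dvd.mul_right hQn j.val

lemma A_mul_B [hQ1 : Fact (1 < Q)] (R₀ : ℕ) (hrR : r * (R₀ : ZMod P) = 1) :
    (A : Mdl P Q K r) * B = B * A ^ R₀ := by
  have hQ : 1 < Q := hQ1.out
  have hv1 : (1 : ZMod Q).val = 1 := ZMod.val_one Q
  rw [A_pow, A, B, mul_def, mul_def, mk'_inj, hv1, ZMod.val_zero]
  have d1 : (0 + 1) / Q = 0 := Nat.div_eq_of_lt (by omega)
  rw [d1]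
  constructor
  · simpa using hrR.symm
  · rw [add_zero, zero_add]

end Mdl

section Pres

variable {G : Type*} [Group G]

/-- reduce a zpow of a finite-order element to a bounded natural power -/
lemma zpow_reduce {x : G} {n : ℕ} (hn : 0 < n) (hx : x ^ n = 1) (m : ℤ) :
    ∃ s : ℕ, s < n ∧ x ^ m = x ^ s := by
  have hzn : x ^ (n : ℤ) = 1 := by rw [zpow_natCast, hx]
  refine ⟨(m % (n : ℤ)).toNat, ?_, ?_⟩
  · have h1 : m % (n : ℤ) < n := Int.emod_lt_of_pos m (by exact_mod_cast hn)
    omega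
  · have h2 : (0 : ℤ) ≤ m % (n : ℤ) := Int.emod_nonneg m (by positivity)
    rw [← zpow_natCast x, Int.toNat_of_nonneg h2]
    conv_lhs => rw [← Int.mul_ediv_add_emod m (n : ℤ)]
    rw [zpow_add, zpow_mul, hzn, one_zpow, one_mul]

theorem metacyclic_card_dvd (a b : G) (P Q K R : ℕ)
    (hP : 0 < P) (hQ : 0 < Q)
    (ha : a ^ P = 1) (hb : b ^ Q = a ^ K)
    (hc : b⁻¹ * a * b = a ^ R) (hcop : Nat.Coprime R P)
    (hgen : Subgroup.closure ({a, b} : Set G) = ⊤) :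
    Finite G ∧ Nat.card G ∣ P * Q := by
  haveI : NeZero P := ⟨hP.ne'⟩
  have hfina : IsOfFinOrder a := isOfFinOrder_iff_pow_eq_one.mpr ⟨P, hP, ha⟩
  set N := Subgroup.zpowers a with hN
  -- the inverse exponent c
  obtain ⟨c, hc1⟩ : ∃ c : ℕ, R * c ≡ 1 [MOD P] := by
    refine ⟨((R : ZMod P)⁻¹).val, ?_⟩
    have := ZMod.coe_mul_inv_eq_one R hcop
    rw [← ZMod.natCast_eq_natCast_iff]
    push_cast
    rw [ZMod.natCast_val, ZMod.cast_id]
    simpa using this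
  have hac : a ^ (R * c) = a := by
    nth_rewrite 2 [← pow_one a]
    rw [pow_eq_pow_iff_modEq]
    exact hc1.of_dvd (orderOf_dvd_of_pow_eq_one ha)
  have hconj : ∀ k : ℤ, b⁻¹ * a ^ k * b = a ^ (R * k) := by
    intro k
    have : b⁻¹ * a ^ k * b = (b⁻¹ * a * b) ^ k := by
      rw [show b⁻¹ * a * b = b⁻¹ * a * b⁻¹⁻¹ by group, conj_zpow]
      group
    rw [this, hc, ← zpow_natCast, ← zpow_mul, mul_comm (R:ℤ) k]
  have hbab : b * a * b⁻¹ = a ^ c := by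
    have h1 : b⁻¹ * a ^ (c : ℤ) * b = a := by
      rw [hconj c]
      have : ((R : ℤ) * c) = ((R * c : ℕ) : ℤ) := by push_cast; ring
      rw [this, zpow_natCast, hac]
    calc b * a * b⁻¹ = b * (b⁻¹ * a ^ (c : ℤ) * b) * b⁻¹ := by rw [h1]
      _ = a ^ (c : ℤ) := by group
      _ = a ^ c := zpow_natCast a c
  have hconj' : ∀ k : ℤ, b * a ^ k * b⁻¹ = a ^ (c * k) := by
    intro k
    have : b * a ^ k * b⁻¹ = (b * a * b⁻¹) ^ k := by rw [conj_zpow]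
    rw [this, hbab, ← zpow_natCast, ← zpow_mul]
  have hnormal : N.Normal := by
    rw [← Subgroup.normalizer_eq_top_iff, eq_top_iff, ← hgen, Subgroup.closure_le]
    rintro g hg
    rcases hg with rfl | rfl
    · refine Subgroup.mem_normalizer_iff.mpr fun x => ⟨?_, ?_⟩
      · rintro ⟨k, rfl⟩
        exact Subgroup.mem_zpowers_iff.mpr ⟨k, by group⟩
      · rintro hmem
        obtain ⟨k, hk⟩ := Subgroup.mem_zpowers_iff.mp hmem
        have hx : x = g⁻¹ * (g * x * g⁻¹) * g := by group
        rw [hx, ← hk]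
        exact Subgroup.mem_zpowers_iff.mpr ⟨k, by group⟩
    · refine Subgroup.mem_normalizer_iff.mpr fun x => ⟨?_, ?_⟩
      · rintro ⟨k, rfl⟩
        exact Subgroup.mem_zpowers_iff.mpr ⟨(c : ℤ) * k, (hconj' k).symm⟩
      · rintro hmem
        obtain ⟨k, hk⟩ := Subgroup.mem_zpowers_iff.mp hmem
        have hx : x = g⁻¹ * (g * x * g⁻¹) * g := by group
        rw [hx, ← hk, hconj k]
        exact Subgroup.mem_zpowers_iff.mpr ⟨(R : ℤ) * k, rfl⟩
  haveI := hnormal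
  set π := QuotientGroup.mk' N with hπ
  have hπa : π a = 1 := (QuotientGroup.eq_one_iff a).mpr (Subgroup.mem_zpowers a)
  have hπbQ : (π b) ^ Q = 1 := by
    rw [← map_pow, hb]
    exact (QuotientGroup.eq_one_iff _).mpr (Subgroup.pow_mem _ (Subgroup.mem_zpowers a) K)
  have hgenq : Subgroup.zpowers (π b) = ⊤ := by
    have h1 : Subgroup.map π (Subgroup.closure {a, b}) = Subgroup.closure {π a, π b} := by
      rw [MonoidHom.map_closure, Set.image_pair]
    have h2 : Subgroup.map π (Subgroup.closure {a, b}) = ⊤ := by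
      rw [hgen, ← MonoidHom.range_eq_map, MonoidHom.range_eq_top]
      exact QuotientGroup.mk'_surjective N
    rw [h1, hπa] at h2
    rw [Subgroup.zpowers_eq_closure, eq_top_iff, ← h2, Subgroup.closure_le]
    rintro x hx
    rcases hx with rfl | rfl
    · exact one_mem _
    · exact Subgroup.subset_closure rfl
  have hfinb : IsOfFinOrder (π b) := isOfFinOrder_iff_pow_eq_one.mpr ⟨Q, hQ, hπbQ⟩
  haveI hfinN : Finite N := (Set.finite_coe_iff).mpr (finite_zpowers.mpr hfina)
  haveI hfinQuot : Finite (G ⧸ N) := by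
    haveI : Finite (Subgroup.zpowers (π b)) :=
      (Set.finite_coe_iff).mpr (finite_zpowers.mpr hfinb)
    rw [hgenq] at this
    exact Finite.of_equiv _ Subgroup.topEquiv.toEquiv
  haveI hfinG : Finite G :=
    Finite.of_equiv _ (Subgroup.groupEquivQuotientProdSubgroup (s := N)).symm
  refine ⟨hfinG, ?_⟩
  rw [Subgroup.card_eq_card_quotient_mul_card_subgroup N]
  have hd1 : Nat.card (G ⧸ N) ∣ Q := by
    have : Nat.card (G ⧸ N) = orderOf (π b) := by
      rw [← Nat.card_zpowers, hgenq, Subgroup.card_top]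
    rw [this]
    exact orderOf_dvd_of_pow_eq_one hπbQ
  have hd2 : Nat.card N ∣ P := by
    rw [hN, Nat.card_zpowers]
    exact orderOf_dvd_of_pow_eq_one ha
  rw [mul_comm P Q]
  exact mul_dvd_mul hd1 hd2

end Pres

section Bridge

open Mdl

theorem metacyclic_main (p f E N K : ℕ) (hp : p.Prime) (hf : 1 ≤ f) (hN : 1 ≤ N)
    (hEf : E ≤ N + f) (hKdvd : p ^ E ∣ K * p ^ f)
    {G : Type*} [Group G] (a b : G)
    (ha : a ^ p ^ E = 1) (hb : b ^ p ^ N = a ^ K)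
    (hc : b⁻¹ * a * b = a ^ (1 + p ^ f))
    (hgen : Subgroup.closure ({a, b} : Set G) = ⊤)
    (huniv : ∀ (H : Type) [Group H], ∀ (x y : H), x ^ p ^ E = 1 → y ^ p ^ N = x ^ K →
      y⁻¹ * x * y = x ^ (1 + p ^ f) → ∃ φ : G →* H, φ a = x ∧ φ b = y) :
    Nat.card G = p ^ (E + N) ∧
    (∀ n : ℕ, a ^ n = 1 ↔ p ^ E ∣ n) ∧
    (∀ n : ℕ, b ^ n = 1 ↔ p ^ N ∣ n ∧ p ^ E ∣ K * (n / p ^ N)) ∧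
    (∀ ex : ℕ, N ≤ ex → E ≤ ex → p ^ E ∣ K * p ^ (ex - N) → Monoid.exponent G ∣ p ^ ex) := by
  have hp2 : 2 ≤ p := hp.two_le
  set P := p ^ E with hPdef
  set Q := p ^ N with hQdef
  set R₀ := 1 + p ^ f with hR₀def
  have hPpos : 0 < P := pow_pos (by omega) E
  have hQpos : 0 < Q := pow_pos (by omega) N
  have hQ1 : 1 < Q := Nat.one_lt_pow (by omega) (by omega)
  haveI : NeZero P := ⟨hPpos.ne'⟩
  haveI : NeZero Q := ⟨hQpos.ne'⟩
  haveI : Fact (1 < Q) := ⟨hQ1⟩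
  set r : ZMod P := ((R₀ : ℕ) : ZMod P) ^ (Q - 1) with hrdef
  -- R₀ ^ Q = 1 in ZMod P
  have hfp : ((p : ℤ)) ∣ (R₀ : ℤ) - 1 := by
    rw [hR₀def]; push_cast
    rw [add_sub_cancel_left]
    exact dvd_pow_self (p : ℤ) (by omega)
  have hRQdvd : ((P : ℤ)) ∣ (R₀ : ℤ) ^ Q - 1 := by
    have h1 : ((p : ℤ) ^ N) * ((R₀ : ℤ) - 1) ∣ (R₀ : ℤ) ^ Q - 1 := dvd_pow_sub_one p _ hfp N
    have h2 : ((R₀ : ℤ) - 1) = (p : ℤ) ^ f := by rw [hR₀def]; push_cast; ring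
    rw [h2, ← pow_add] at h1
    refine dvd_trans ?_ h1
    rw [hPdef]; push_cast
    exact pow_dvd_pow _ hEf
  have hRQ : ((R₀ : ℕ) : ZMod P) ^ Q = 1 := by
    have : (((R₀ : ℤ) ^ Q - 1 : ℤ) : ZMod P) = 0 := by
      rw [ZMod.intCast_zmod_eq_zero_iff_dvd]
      exact_mod_cast hRQdvd
    push_cast at this
    linear_combination this
  have hrR : r * ((R₀ : ℕ) : ZMod P) = 1 := by
    rw [hrdef, ← pow_succ, Nat.sub_add_cancel (by omega), hRQ]
  have hr : r ^ Q = 1 := by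
    rw [hrdef, ← pow_mul, mul_comm, pow_mul, hRQ, one_pow]
  have hKR : ((K : ℕ) : ZMod P) * (((R₀ : ℕ) : ZMod P) - 1) = 0 := by
    have h0 : ((K * p ^ f : ℕ) : ZMod P) = 0 := by
      rw [ZMod.natCast_eq_zero_iff]; exact hKdvd
    rw [hR₀def]
    push_cast at h0 ⊢
    linear_combination h0
  have hKr : ((K : ℕ) : ZMod P) * (r - 1) = 0 := by
    linear_combination ((K : ℕ) : ZMod P) * hrR - r * hKR
  haveI : Fact (r ^ Q = 1) := ⟨hr⟩
  haveI : Fact (((K : ℕ) : ZMod P) * (r - 1) = 0) := ⟨hKr⟩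
  -- relations in the model
  have hA : (A : Mdl P Q K r) ^ P = 1 := (A_pow_eq_one_iff P).mpr dvd_rfl
  have hB : (B : Mdl P Q K r) ^ Q = A ^ K := by
    rw [B_pow, A_pow, Nat.div_self hQpos, Nat.mul_one, mk'_inj]
    exact ⟨rfl, by simp⟩
  have hAB : (B : Mdl P Q K r)⁻¹ * A * B = A ^ R₀ := by
    have h1 := A_mul_B (P := P) (Q := Q) (K := K) (r := r) R₀ hrR
    calc (B : Mdl P Q K r)⁻¹ * A * B = B⁻¹ * (A * B) := mul_assoc _ _ _
      _ = B⁻¹ * (B * A ^ R₀) := congrArg (B⁻¹ * ·) h1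
      _ = A ^ R₀ := inv_mul_cancel_left _ _
  obtain ⟨φ, hφa, hφb⟩ := huniv (Mdl P Q K r) A B hA hB hAB
  have hsurj : Function.Surjective φ := by
    rw [← MonoidHom.range_eq_top, eq_top_iff, ← closure_AB (P := P) (Q := Q) (K := K) (r := r),
      Subgroup.closure_le]
    rintro x hx
    rcases hx with rfl | rfl
    · exact ⟨a, hφa⟩
    · exact ⟨b, hφb⟩
  have hndvd : ¬ p ∣ R₀ := by
    intro hdvd
    have h1 : p ∣ p ^ f := dvd_pow_self p (by omega)
    have h2 : p ∣ 1 := (Nat.dvd_add_right h1).mp (by rwa [hR₀def, add_comm] at hdvd)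
    have := Nat.dvd_one.mp h2
    omega
  have hcop : Nat.Coprime R₀ P :=
    Nat.Coprime.pow_right E (Nat.coprime_comm.mp (hp.coprime_iff_not_dvd.mpr hndvd))
  obtain ⟨hfinG, hdvdG⟩ := metacyclic_card_dvd a b P Q K R₀ hPpos hQpos ha hb hc hcop hgen
  have hcardM : Nat.card (Mdl P Q K r) = P * Q := card_eq
  have hle : P * Q ≤ Nat.card G := by
    rw [← hcardM]
    exact Nat.card_le_card_of_surjective φ hsurj
  have hcardG : Nat.card G = P * Q :=
    Nat.le_antisymm (Nat.le_of_dvd (by positivity) hdvdG) hle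
  have hbij : Function.Bijective φ :=
    (Nat.bijective_iff_surjective_and_card φ).mpr ⟨hsurj, by rw [hcardG, hcardM]⟩
  refine ⟨by rw [hcardG, hPdef, hQdef, ← pow_add], ?_, ?_, ?_⟩
  · intro n
    constructor
    · intro h
      have h2 : (A : Mdl P Q K r) ^ n = 1 := by
        rw [← hφa, ← map_pow, h, map_one]
      exact (A_pow_eq_one_iff n).mp h2
    · intro h
      refine hbij.injective ?_
      rw [map_pow, map_one, hφa]
      exact (A_pow_eq_one_iff n).mpr h
  · intro n
    constructor
    · intro h
      have h2 : (B : Mdl P Q K r) ^ n = 1 := by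
        rw [← hφb, ← map_pow, h, map_one]
      exact (B_pow_eq_one_iff n).mp h2
    · intro h
      refine hbij.injective ?_
      rw [map_pow, map_one, hφb]
      exact (B_pow_eq_one_iff n).mpr h
  · intro ex hNex hEex hKex
    refine Monoid.exponent_dvd_of_forall_pow_eq_one fun g => ?_
    refine hbij.injective ?_
    rw [map_pow, map_one]
    refine Mdl.pow_eq_one _ (pow_dvd_pow p hNex) ?_ ?_ (φ g)
    · intro j₀
      set u : ℤ := (R₀ : ℤ) ^ ((Q - 1) * j₀) with hudef
      have hu : (p : ℤ) ∣ u - 1 := by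
        refine dvd_trans hfp ?_
        simpa using sub_dvd_pow_sub_pow (R₀ : ℤ) 1 ((Q - 1) * j₀)
      have hdvd1 : ((P : ℤ)) ∣ ∑ k ∈ Finset.range (p ^ ex), u ^ k := by
        refine dvd_trans ?_ (dvd_geom_sum p u hu ex)
        rw [hPdef]
        exact_mod_cast pow_dvd_pow (p : ℤ) hEex
      have hcast : ((∑ k ∈ Finset.range (p ^ ex), u ^ k : ℤ) : ZMod P) = 0 := by
        rw [ZMod.intCast_zmod_eq_zero_iff_dvd]
        exact hdvd1
      calc ∑ k ∈ Finset.range (p ^ ex), r ^ (k * j₀)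
          = ∑ k ∈ Finset.range (p ^ ex), ((u : ℤ) : ZMod P) ^ k := by
            refine Finset.sum_congr rfl fun k _ => ?_
            rw [hudef, hrdef]
            push_cast
            rw [← pow_mul, ← pow_mul]
            ring_nf
        _ = 0 := by rw [← hcast]; push_cast; ring
    · intro j₀ hj₀
      have hsplit : p ^ ex = Q * p ^ (ex - N) := by
        rw [hQdef, ← pow_add]
        congr 1
        omega
      have hdiveq : p ^ ex * j₀ / Q = p ^ (ex - N) * j₀ := by
        rw [hsplit, mul_assoc, Nat.mul_div_cancel_left _ hQpos]
      rw [hdiveq, ZMod.natCast_eq_zero_iff, ← mul_assoc]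
      exact Dvd.dvd.mul_right hKex j₀

end Bridge

section AbSection

open Multiplicative

theorem metacyclic_ab (p f E N K : ℕ) (hp : p.Prime) (hf : 1 ≤ f) (hN : 1 ≤ N)
    (hfE : f ≤ E) (hKf : p ^ f ∣ K)
    {G : Type*} [Group G] (a b : G)
    (ha : a ^ p ^ E = 1) (hb : b ^ p ^ N = a ^ K)
    (hc : b⁻¹ * a * b = a ^ (1 + p ^ f))
    (hgen : Subgroup.closure ({a, b} : Set G) = ⊤)
    (huniv : ∀ (H : Type) [Group H], ∀ (x y : H), x ^ p ^ E = 1 → y ^ p ^ N = x ^ K →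
      y⁻¹ * x * y = x ^ (1 + p ^ f) → ∃ φ : G →* H, φ a = x ∧ φ b = y) :
    Nat.card (Abelianization G) = p ^ (f + N) ∧
    Monoid.exponent (Abelianization G) = p ^ (max f N) := by
  have hp2 : 2 ≤ p := hp.two_le
  have hfpos : 0 < p ^ f := pow_pos (by omega) f
  have hNpos : 0 < p ^ N := pow_pos (by omega) N
  haveI : NeZero (p ^ f) := ⟨hfpos.ne'⟩
  haveI : NeZero (p ^ N) := ⟨hNpos.ne'⟩
  set T := Multiplicative (ZMod (p ^ f) × ZMod (p ^ N)) with hTdef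
  set x : T := ofAdd ((1 : ZMod (p ^ f)), (0 : ZMod (p ^ N))) with hxdef
  set y : T := ofAdd ((0 : ZMod (p ^ f)), (1 : ZMod (p ^ N))) with hydef
  have hxpow : ∀ n : ℕ, x ^ n = ofAdd (((n : ℕ) : ZMod (p ^ f)), 0) := by
    intro n
    rw [hxdef, ← ofAdd_nsmul]
    congr 1
    rw [Prod.smul_mk, smul_zero, nsmul_eq_mul, mul_one]
  have hypow : ∀ n : ℕ, y ^ n = ofAdd (0, ((n : ℕ) : ZMod (p ^ N))) := by
    intro n
    rw [hydef, ← ofAdd_nsmul]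
    congr 1
    rw [Prod.smul_mk, smul_zero, nsmul_eq_mul, mul_one]
  have hx1 : x ^ p ^ E = 1 := by
    rw [hxpow, (ZMod.natCast_eq_zero_iff _ _).mpr (pow_dvd_pow p hfE)]
    rfl
  have hy1 : y ^ p ^ N = x ^ K := by
    rw [hxpow, hypow, ZMod.natCast_self, (ZMod.natCast_eq_zero_iff _ _).mpr hKf]
  have hxy : y⁻¹ * x * y = x ^ (1 + p ^ f) := by
    have h1 : y⁻¹ * x * y = x := by
      rw [mul_comm y⁻¹ x, mul_assoc, inv_mul_cancel, mul_one]
    have h2 : x ^ (1 + p ^ f) = x := by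
      rw [hxpow]
      have hz : ((p ^ f : ℕ) : ZMod (p ^ f)) = 0 := ZMod.natCast_self _
      have : ((1 + p ^ f : ℕ) : ZMod (p ^ f)) = 1 := by
        rw [Nat.cast_add, Nat.cast_one, hz, add_zero]
      rw [this, hxdef]
    rw [h1, h2]
  obtain ⟨φ, hφa, hφb⟩ := huniv T x y hx1 hy1 hxy
  have hφsurj : Function.Surjective φ := by
    intro t
    refine ⟨a ^ (toAdd t).1.val * b ^ (toAdd t).2.val, ?_⟩
    rw [map_mul, map_pow, map_pow, hφa, hφb, hxpow, hypow, ← ofAdd_add]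
    show ofAdd (((toAdd t).1.val : ZMod (p ^ f)) + 0, 0 + ((toAdd t).2.val : ZMod (p ^ N))) = t
    rw [add_zero, zero_add, ZMod.natCast_val, ZMod.cast_id, ZMod.natCast_val, ZMod.cast_id]
    exact ofAdd_toAdd t
  set abar := Abelianization.of a with habar
  set bbar := Abelianization.of b with hbbar
  have hcomm : ∀ u v : Abelianization G, u * v = v * u := mul_comm
  have haf : abar ^ p ^ f = 1 := by
    have h1 : (Abelianization.of) (b⁻¹ * a * b) = abar := by
      rw [map_mul, map_mul, map_inv]
      rw [mul_comm ((Abelianization.of b)⁻¹) abar, mul_assoc, inv_mul_cancel, mul_one]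
    have h2 : abar = abar * abar ^ p ^ f := by
      conv_lhs => rw [← h1, hc, map_pow, pow_add, pow_one]
    nth_rewrite 1 [← mul_one abar] at h2
    exact (mul_left_cancel h2).symm
  have hbN : bbar ^ p ^ N = 1 := by
    obtain ⟨t, ht⟩ := hKf
    have hstep : bbar ^ p ^ N = abar ^ K := by
      rw [hbbar, habar, ← map_pow, ← map_pow, hb]
    rw [hstep, ht, pow_mul, haf, one_pow]
  have hofsurj : Function.Surjective (Abelianization.of (G := G)) :=
    fun g => Quotient.inductionOn g fun g => ⟨g, rfl⟩
  have hgenab : Subgroup.closure ({abar, bbar} : Set (Abelianization G)) = ⊤ := by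
    have h1 : Subgroup.map Abelianization.of (Subgroup.closure {a, b})
        = Subgroup.closure {abar, bbar} := by
      rw [MonoidHom.map_closure, Set.image_pair]
    have h2 : Subgroup.map Abelianization.of (Subgroup.closure {a, b}) = ⊤ := by
      rw [hgen, ← MonoidHom.range_eq_map, MonoidHom.range_eq_top]
      exact hofsurj
    rw [← h1, h2]
  have hmem : ∀ g : Abelianization G, ∃ m n : ℤ, abar ^ m * bbar ^ n = g := by
    intro g
    have : g ∈ Subgroup.closure ({abar, bbar} : Set (Abelianization G)) := by
      rw [hgenab]; trivial
    exact Subgroup.mem_closure_pair.mp this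
  -- surjection from the finite parameter space
  set σ : ZMod (p ^ f) × ZMod (p ^ N) → Abelianization G :=
    fun su => abar ^ su.1.val * bbar ^ su.2.val with hσdef
  have hσsurj : Function.Surjective σ := by
    intro g
    obtain ⟨m, n, rfl⟩ := hmem g
    obtain ⟨s, hs, hsm⟩ := zpow_reduce hfpos haf m
    obtain ⟨t, ht, htn⟩ := zpow_reduce hNpos hbN n
    refine ⟨((s : ZMod (p ^ f)), (t : ZMod (p ^ N))), ?_⟩
    rw [hσdef]
    simp only
    rw [ZMod.val_natCast_of_lt hs, ZMod.val_natCast_of_lt ht, hsm, htn]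
  haveI hfinab : Finite (Abelianization G) := Finite.of_surjective σ hσsurj
  set ψ : Abelianization G →* T := Abelianization.lift φ with hψdef
  have hψsurj : Function.Surjective ψ := by
    intro t
    obtain ⟨g, rfl⟩ := hφsurj t
    exact ⟨Abelianization.of g, Abelianization.lift_apply_of φ g⟩
  have hcardT : Nat.card T = p ^ f * p ^ N := by
    rw [hTdef, Nat.card_congr (Multiplicative.toAdd (α := ZMod (p ^ f) × ZMod (p ^ N))),
      Nat.card_prod, Nat.card_zmod, Nat.card_zmod]
  have hcard_le : Nat.card (Abelianization G) ≤ p ^ f * p ^ N := by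
    have h1 := Nat.card_le_card_of_surjective σ hσsurj
    rwa [Nat.card_prod, Nat.card_zmod, Nat.card_zmod] at h1
  have hcard_ge : p ^ f * p ^ N ≤ Nat.card (Abelianization G) := by
    rw [← hcardT]
    exact Nat.card_le_card_of_surjective ψ hψsurj
  have hcard : Nat.card (Abelianization G) = p ^ (f + N) := by
    rw [pow_add]
    exact Nat.le_antisymm hcard_le hcard_ge
  refine ⟨hcard, ?_⟩
  set mx := max f N with hmx
  have hub : Monoid.exponent (Abelianization G) ∣ p ^ mx := by
    refine Monoid.exponent_dvd_of_forall_pow_eq_one fun g => ?_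
    obtain ⟨m, n, rfl⟩ := hmem g
    have key : ∀ (z : Abelianization G) (k : ℕ), z ^ p ^ k = 1 → k ≤ mx →
        ∀ m : ℤ, (z ^ m) ^ p ^ mx = 1 := by
      intro z k hz hk m
      rw [← zpow_natCast (z ^ m), ← zpow_mul]
      have : m * ((p ^ mx : ℕ) : ℤ) = ((p ^ k : ℕ) : ℤ) * (m * ((p ^ (mx - k) : ℕ) : ℤ)) := by
        push_cast
        rw [show (p : ℤ) ^ mx = p ^ k * p ^ (mx - k) by rw [← pow_add]; congr 1; omega]
        ring
      rw [this, zpow_mul, zpow_natCast, hz, one_zpow]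
    rw [mul_pow]
    rw [key abar f haf (le_max_left f N) m, key bbar N hbN (le_max_right f N) n, mul_one]
  have hlbf : p ^ f ∣ Monoid.exponent (Abelianization G) := by
    have h1 : abar ^ Monoid.exponent (Abelianization G) = 1 :=
      Monoid.pow_exponent_eq_one abar
    have h2 : x ^ Monoid.exponent (Abelianization G) = 1 := by
      have := congrArg ψ h1
      rwa [map_pow, map_one, hψdef, habar, Abelianization.lift_apply_of, hφa] at this
    rw [hxpow] at h2
    have h3 : ((Monoid.exponent (Abelianization G) : ℕ) : ZMod (p ^ f)) = 0 := by
      have := congrArg Multiplicative.toAdd h2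
      simpa using congrArg Prod.fst this
    exact (ZMod.natCast_eq_zero_iff _ _).mp h3
  have hlbN : p ^ N ∣ Monoid.exponent (Abelianization G) := by
    have h1 : bbar ^ Monoid.exponent (Abelianization G) = 1 :=
      Monoid.pow_exponent_eq_one bbar
    have h2 : y ^ Monoid.exponent (Abelianization G) = 1 := by
      have := congrArg ψ h1
      rwa [map_pow, map_one, hψdef, hbbar, Abelianization.lift_apply_of, hφb] at this
    rw [hypow] at h2
    have h3 : ((Monoid.exponent (Abelianization G) : ℕ) : ZMod (p ^ N)) = 0 := by
      have := congrArg Multiplicative.toAdd h2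
      simpa using congrArg Prod.snd this
    exact (ZMod.natCast_eq_zero_iff _ _).mp h3
  have hlb : p ^ mx ∣ Monoid.exponent (Abelianization G) := by
    rcases max_cases f N with ⟨hmax, _⟩ | ⟨hmax, _⟩
    · rw [hmx, hmax]; exact hlbf
    · rw [hmx, hmax]; exact hlbN
  exact Nat.dvd_antisymm hub hlb

end AbSection

section PGHelp

lemma pg_rel_one {α : Type*} {rels : Set (FreeGroup α)} {w : FreeGroup α} (hw : w ∈ rels) :
    PresentedGroup.mk rels w = 1 :=
  (QuotientGroup.eq_one_iff _).mpr (Subgroup.subset_normalClosure hw)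

lemma pg_gen_pair {rels : Set (FreeGroup (Fin 2))} :
    Subgroup.closure ({PresentedGroup.of 0, PresentedGroup.of 1} :
      Set (PresentedGroup rels)) = ⊤ := by
  have h := PresentedGroup.closure_range_of rels
  have heq : Set.range (PresentedGroup.of : Fin 2 → PresentedGroup rels)
      = {PresentedGroup.of 0, PresentedGroup.of 1} := by
    ext g
    constructor
    · rintro ⟨i, rfl⟩
      fin_cases i
      · exact Set.mem_insert _ _
      · exact Set.mem_insert_of_mem _ rfl
    · rintro (rfl | rfl)
      exacts [⟨0, rfl⟩, ⟨1, rfl⟩]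
  rwa [heq] at h

end PGHelp

section M1sec

variable (p d e f : ℕ)

lemma M1_rel_a : (M1a p d e f) ^ p ^ e = 1 := by
  have h := pg_rel_one (rels := M1rels p d e f) (w := FreeGroup.of 0 ^ p ^ e)
    (Set.mem_insert _ _)
  rw [map_pow] at h
  exact h

lemma M1_rel_b : (M1b p d e f) ^ p ^ d = (M1a p d e f) ^ 0 := by
  have h := pg_rel_one (rels := M1rels p d e f) (w := FreeGroup.of 1 ^ p ^ d)
    (Set.mem_insert_of_mem _ (Set.mem_insert _ _))
  rw [map_pow] at h
  rw [pow_zero]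
  exact h

lemma M1_rel_c : (M1b p d e f)⁻¹ * M1a p d e f * M1b p d e f
    = (M1a p d e f) ^ (1 + p ^ f) := by
  have h := pg_rel_one (rels := M1rels p d e f)
    (w := (FreeGroup.of 1)⁻¹ * FreeGroup.of 0 * FreeGroup.of 1 *
      (FreeGroup.of 0 ^ (1 + p ^ f))⁻¹)
    (Set.mem_insert_of_mem _ (Set.mem_insert_of_mem _ rfl))
  rw [map_mul, map_mul, map_mul, map_inv, map_inv, map_pow] at h
  rw [mul_inv_eq_one] at h
  exact h

lemma M1_gen : Subgroup.closure ({M1a p d e f, M1b p d e f} : Set (M1 p d e f)) = ⊤ :=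
  pg_gen_pair

lemma M1_univ : ∀ (H : Type) [Group H], ∀ (x y : H), x ^ p ^ e = 1 → y ^ p ^ d = x ^ 0 →
    y⁻¹ * x * y = x ^ (1 + p ^ f) →
    ∃ φ : M1 p d e f →* H, φ (M1a p d e f) = x ∧ φ (M1b p d e f) = y := by
  intro H _ x y hx hy hxy
  have hrels : ∀ r ∈ M1rels p d e f, FreeGroup.lift (![x, y]) r = 1 := by
    intro r hr
    simp only [M1rels, Set.mem_insert_iff, Set.mem_singleton_iff] at hr
    rcases hr with rfl | rfl | rfl
    · rw [map_pow, FreeGroup.lift_apply_of]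
      simpa using hx
    · rw [map_pow, FreeGroup.lift_apply_of]
      rw [pow_zero] at hy
      simpa using hy
    · rw [map_mul, map_mul, map_mul, map_inv, map_inv, map_pow, FreeGroup.lift_apply_of,
        FreeGroup.lift_apply_of, mul_inv_eq_one]
      simpa using hxy
  exact ⟨PresentedGroup.toGroup hrels,
    by rw [M1a, PresentedGroup.toGroup.of]; simp,
    by rw [M1b, PresentedGroup.toGroup.of]; simp⟩

theorem M1_invs (hp : p.Prime) (hcond : Cond1 d e f) :
    Nat.card (M1 p d e f) = p ^ (e + d) ∧
    Monoid.exponent (M1 p d e f) = p ^ e ∧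
    Nat.card (Abelianization (M1 p d e f)) = p ^ (f + d) ∧
    Monoid.exponent (Abelianization (M1 p d e f)) = p ^ (max f d) := by
  simp only [Cond1] at hcond
  have hf : 1 ≤ f := by omega
  have hd : 1 ≤ d := by omega
  have hde : d ≤ e := by omega
  have hfe : f ≤ e := by omega
  have hEf : e ≤ d + f := by omega
  obtain ⟨hcard, hai, _, hexp⟩ := metacyclic_main p f e d 0 hp hf hd hEf (by simp)
    (M1a p d e f) (M1b p d e f) (M1_rel_a p d e f) (M1_rel_b p d e f) (M1_rel_c p d e f)
    (M1_gen p d e f) (M1_univ p d e f)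
  obtain ⟨habcard, habexp⟩ := metacyclic_ab p f e d 0 hp hf hd hfe (by simp)
    (M1a p d e f) (M1b p d e f) (M1_rel_a p d e f) (M1_rel_b p d e f) (M1_rel_c p d e f)
    (M1_gen p d e f) (M1_univ p d e f)
  refine ⟨hcard, ?_, habcard, habexp⟩
  have hub : Monoid.exponent (M1 p d e f) ∣ p ^ e :=
    hexp e hde le_rfl (by simp)
  have hlb : p ^ e ∣ Monoid.exponent (M1 p d e f) := by
    have h1 : p ^ e ∣ orderOf (M1a p d e f) :=
      (hai (orderOf (M1a p d e f))).mp (pow_orderOf_eq_one _)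
    exact h1.trans (Monoid.order_dvd_exponent _)
  exact Nat.dvd_antisymm hub hlb

end M1sec

section M2sec

variable (p d e f : ℕ)

lemma M2_rel_a : (M2a p d e f) ^ p ^ d = 1 := by
  have h := pg_rel_one (rels := M2rels p d e f) (w := FreeGroup.of 0 ^ p ^ d)
    (Set.mem_insert _ _)
  rw [map_pow] at h
  exact h

lemma M2_rel_b : (M2b p d e f) ^ p ^ e = (M2a p d e f) ^ 0 := by
  have h := pg_rel_one (rels := M2rels p d e f) (w := FreeGroup.of 1 ^ p ^ e)
    (Set.mem_insert_of_mem _ (Set.mem_insert _ _))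
  rw [map_pow] at h
  rw [pow_zero]
  exact h

lemma M2_rel_c : (M2b p d e f)⁻¹ * M2a p d e f * M2b p d e f
    = (M2a p d e f) ^ (1 + p ^ f) := by
  have h := pg_rel_one (rels := M2rels p d e f)
    (w := (FreeGroup.of 1)⁻¹ * FreeGroup.of 0 * FreeGroup.of 1 *
      (FreeGroup.of 0 ^ (1 + p ^ f))⁻¹)
    (Set.mem_insert_of_mem _ (Set.mem_insert_of_mem _ rfl))
  rw [map_mul, map_mul, map_mul, map_inv, map_inv, map_pow] at h
  rw [mul_inv_eq_one] at h
  exact h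

lemma M2_gen : Subgroup.closure ({M2a p d e f, M2b p d e f} : Set (M2 p d e f)) = ⊤ :=
  pg_gen_pair

lemma M2_univ : ∀ (H : Type) [Group H], ∀ (x y : H), x ^ p ^ d = 1 → y ^ p ^ e = x ^ 0 →
    y⁻¹ * x * y = x ^ (1 + p ^ f) →
    ∃ φ : M2 p d e f →* H, φ (M2a p d e f) = x ∧ φ (M2b p d e f) = y := by
  intro H _ x y hx hy hxy
  have hrels : ∀ r ∈ M2rels p d e f, FreeGroup.lift (![x, y]) r = 1 := by
    intro r hr
    simp only [M2rels, Set.mem_insert_iff, Set.mem_singleton_iff] at hr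
    rcases hr with rfl | rfl | rfl
    · rw [map_pow, FreeGroup.lift_apply_of]
      simpa using hx
    · rw [map_pow, FreeGroup.lift_apply_of]
      rw [pow_zero] at hy
      simpa using hy
    · rw [map_mul, map_mul, map_mul, map_inv, map_inv, map_pow, FreeGroup.lift_apply_of,
        FreeGroup.lift_apply_of, mul_inv_eq_one]
      simpa using hxy
  exact ⟨PresentedGroup.toGroup hrels,
    by rw [M2a, PresentedGroup.toGroup.of]; simp,
    by rw [M2b, PresentedGroup.toGroup.of]; simp⟩

theorem M2_invs (hp : p.Prime) (hcond : Cond2 d e f) :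
    Nat.card (M2 p d e f) = p ^ (d + e) ∧
    Monoid.exponent (M2 p d e f) = p ^ e ∧
    Nat.card (Abelianization (M2 p d e f)) = p ^ (f + e) ∧
    Monoid.exponent (Abelianization (M2 p d e f)) = p ^ e := by
  simp only [Cond2] at hcond
  have hf : 1 ≤ f := by omega
  have he : 1 ≤ e := by omega
  have hde : d ≤ e := by omega
  have hfd : f ≤ d := by omega
  have hEf : d ≤ e + f := by omega
  obtain ⟨hcard, _, hbi, hexp⟩ := metacyclic_main p f d e 0 hp hf he hEf (by simp)
    (M2a p d e f) (M2b p d e f) (M2_rel_a p d e f) (M2_rel_b p d e f) (M2_rel_c p d e f)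
    (M2_gen p d e f) (M2_univ p d e f)
  obtain ⟨habcard, habexp⟩ := metacyclic_ab p f d e 0 hp hf he hfd (by simp)
    (M2a p d e f) (M2b p d e f) (M2_rel_a p d e f) (M2_rel_b p d e f) (M2_rel_c p d e f)
    (M2_gen p d e f) (M2_univ p d e f)
  have hmax : max f e = e := max_eq_right (by omega)
  rw [hmax] at habexp
  refine ⟨hcard, ?_, habcard, habexp⟩
  have hub : Monoid.exponent (M2 p d e f) ∣ p ^ e :=
    hexp e le_rfl hde (by simp)
  have hlb : p ^ e ∣ Monoid.exponent (M2 p d e f) := by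
    have h1 := (hbi (orderOf (M2b p d e f))).mp (pow_orderOf_eq_one _)
    exact h1.1.trans (Monoid.order_dvd_exponent _)
  exact Nat.dvd_antisymm hub hlb

end M2sec

section M3sec

variable (p d e h f : ℕ)

lemma M3_rel_a : (M3a p d e h f) ^ p ^ h = 1 := by
  have hh := pg_rel_one (rels := M3rels p d e h f) (w := FreeGroup.of 0 ^ p ^ h)
    (Set.mem_insert _ _)
  rw [map_pow] at hh
  exact hh

lemma M3_rel_b : (M3b p d e h f) ^ p ^ (d + e - h) = (M3a p d e h f) ^ p ^ d := by
  have hh := pg_rel_one (rels := M3rels p d e h f)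
    (w := FreeGroup.of 1 ^ p ^ (d + e - h) * (FreeGroup.of 0 ^ p ^ d)⁻¹)
    (Set.mem_insert_of_mem _ (Set.mem_insert _ _))
  rw [map_mul, map_inv, map_pow, map_pow, mul_inv_eq_one] at hh
  exact hh

lemma M3_rel_c : (M3b p d e h f)⁻¹ * M3a p d e h f * M3b p d e h f
    = (M3a p d e h f) ^ (1 + p ^ f) := by
  have hh := pg_rel_one (rels := M3rels p d e h f)
    (w := (FreeGroup.of 1)⁻¹ * FreeGroup.of 0 * FreeGroup.of 1 *
      (FreeGroup.of 0 ^ (1 + p ^ f))⁻¹)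
    (Set.mem_insert_of_mem _ (Set.mem_insert_of_mem _ rfl))
  rw [map_mul, map_mul, map_mul, map_inv, map_inv, map_pow] at hh
  rw [mul_inv_eq_one] at hh
  exact hh

lemma M3_gen : Subgroup.closure ({M3a p d e h f, M3b p d e h f} : Set (M3 p d e h f)) = ⊤ :=
  pg_gen_pair

lemma M3_univ : ∀ (H : Type) [Group H], ∀ (x y : H), x ^ p ^ h = 1 →
    y ^ p ^ (d + e - h) = x ^ p ^ d → y⁻¹ * x * y = x ^ (1 + p ^ f) →
    ∃ φ : M3 p d e h f →* H, φ (M3a p d e h f) = x ∧ φ (M3b p d e h f) = y := by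
  intro H _ x y hx hy hxy
  have hrels : ∀ r ∈ M3rels p d e h f, FreeGroup.lift (![x, y]) r = 1 := by
    intro r hr
    simp only [M3rels, Set.mem_insert_iff, Set.mem_singleton_iff] at hr
    rcases hr with rfl | rfl | rfl
    · rw [map_pow, FreeGroup.lift_apply_of]
      simpa using hx
    · rw [map_mul, map_inv, map_pow, map_pow, FreeGroup.lift_apply_of, FreeGroup.lift_apply_of,
        mul_inv_eq_one]
      simpa using hy
    · rw [map_mul, map_mul, map_mul, map_inv, map_inv, map_pow, FreeGroup.lift_apply_of,
        FreeGroup.lift_apply_of, mul_inv_eq_one]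
      simpa using hxy
  exact ⟨PresentedGroup.toGroup hrels,
    by rw [M3a, PresentedGroup.toGroup.of]; simp,
    by rw [M3b, PresentedGroup.toGroup.of]; simp⟩

theorem M3_invs (hp : p.Prime) (hcond : Cond3 d e h f) :
    Nat.card (M3 p d e h f) = p ^ (h + (d + e - h)) ∧
    Monoid.exponent (M3 p d e h f) = p ^ e ∧
    Nat.card (Abelianization (M3 p d e h f)) = p ^ (f + (d + e - h)) ∧
    Monoid.exponent (Abelianization (M3 p d e h f)) = p ^ (d + e - h) := by
  simp only [Cond3] at hcond
  have hppos : 0 < p := hp.pos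
  set m := d + e - h with hm
  have hf : 1 ≤ f := by omega
  have hN : 1 ≤ m := by omega
  have hEf : h ≤ m + f := by omega
  have hKdvd : p ^ h ∣ p ^ d * p ^ f := by
    rw [← pow_add]
    exact pow_dvd_pow p (by omega)
  obtain ⟨hcard, _, hbi, hexp⟩ := metacyclic_main p f h m (p ^ d) hp hf hN hEf hKdvd
    (M3a p d e h f) (M3b p d e h f) (M3_rel_a p d e h f) (M3_rel_b p d e h f)
    (M3_rel_c p d e h f) (M3_gen p d e h f) (M3_univ p d e h f)
  obtain ⟨habcard, habexp⟩ := metacyclic_ab p f h m (p ^ d) hp hf hN (by omega)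
    (pow_dvd_pow p (by omega))
    (M3a p d e h f) (M3b p d e h f) (M3_rel_a p d e h f) (M3_rel_b p d e h f)
    (M3_rel_c p d e h f) (M3_gen p d e h f) (M3_univ p d e h f)
  have hmax : max f m = m := max_eq_right (by omega)
  rw [hmax] at habexp
  refine ⟨hcard, ?_, habcard, habexp⟩
  have hub : Monoid.exponent (M3 p d e h f) ∣ p ^ e := by
    refine hexp e (by omega) (by omega) ?_
    have : p ^ d * p ^ (e - m) = p ^ h := by
      rw [← pow_add]
      congr 1
      omega
    rw [this]
  have hlb : p ^ e ∣ Monoid.exponent (M3 p d e h f) := by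
    obtain ⟨h1, h2⟩ := (hbi (orderOf (M3b p d e h f))).mp (pow_orderOf_eq_one _)
    set n := orderOf (M3b p d e h f) with hn
    obtain ⟨s, hs⟩ := h1
    have hdiv : n / p ^ m = s := by
      rw [hs, Nat.mul_div_cancel_left _ (pow_pos hppos m)]
    rw [hdiv] at h2
    have h3 : p ^ d * p ^ (h - d) ∣ p ^ d * s := by
      have : p ^ d * p ^ (h - d) = p ^ h := by rw [← pow_add]; congr 1; omega
      rw [this]
      exact h2
    have h4 : p ^ (h - d) ∣ s :=
      (Nat.mul_dvd_mul_iff_left (pow_pos hppos d)).mp h3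
    have h5 : p ^ e ∣ n := by
      have : p ^ e = p ^ m * p ^ (h - d) := by rw [← pow_add]; congr 1; omega
      rw [this, hs]
      exact Nat.mul_dvd_mul_left _ h4
    exact h5.trans (Monoid.order_dvd_exponent _)
  exact Nat.dvd_antisymm hub hlb

end M3sec

section Final

lemma iso_transfer {G H : Type*} [Group G] [Group H] (e : G ≃* H) :
    Nat.card G = Nat.card H ∧ Monoid.exponent G = Monoid.exponent H ∧
    Nat.card (Abelianization G) = Nat.card (Abelianization H) ∧
    Monoid.exponent (Abelianization G) = Monoid.exponent (Abelianization H) :=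
  ⟨Nat.card_congr e.toEquiv, Monoid.exponent_eq_of_mulEquiv e,
   Nat.card_congr e.abelianizationCongr.toEquiv,
   Monoid.exponent_eq_of_mulEquiv e.abelianizationCongr⟩

end Final

theorem stmt_3 (p : ℕ) (hp : p.Prime) (hodd : Odd p) :
    (∀ d e f d' e' f', Cond1 d e f → Cond1 d' e' f' →
      Nonempty (M1 p d e f ≃* M1 p d' e' f') → d = d' ∧ e = e' ∧ f = f') ∧
    (∀ d e f d' e' f', Cond2 d e f → Cond2 d' e' f' →
      Nonempty (M2 p d e f ≃* M2 p d' e' f') → d = d' ∧ e = e' ∧ f = f') ∧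
    (∀ d e h f d' e' h' f', Cond3 d e h f → Cond3 d' e' h' f' →
      Nonempty (M3 p d e h f ≃* M3 p d' e' h' f') → d = d' ∧ e = e' ∧ h = h' ∧ f = f') ∧
    (∀ d e f d' e' f', Cond1 d e f → Cond2 d' e' f' →
      ¬ Nonempty (M1 p d e f ≃* M2 p d' e' f')) ∧
    (∀ d e f d' e' h' f', Cond1 d e f → Cond3 d' e' h' f' →
      ¬ Nonempty (M1 p d e f ≃* M3 p d' e' h' f')) ∧
    (∀ d e f d' e' h' f', Cond2 d e f → Cond3 d' e' h' f' →
      ¬ Nonempty (M2 p d e f ≃* M3 p d' e' h' f')) := by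
  have hp2 : 2 ≤ p := hp.two_le
  have pinj : ∀ {a b : ℕ}, p ^ a = p ^ b → a = b := fun h => Nat.pow_right_injective hp2 h
  refine ⟨?_, ?_, ?_, ?_, ?_, ?_⟩
  · rintro d e f d' e' f' h1 h1' ⟨iso⟩
    obtain ⟨c1, x1, ab1, m1⟩ := M1_invs p d e f hp h1
    obtain ⟨c2, x2, ab2, m2⟩ := M1_invs p d' e' f' hp h1'
    obtain ⟨tc, tx, tab, tm⟩ := iso_transfer iso
    have e1 : e + d = e' + d' := pinj (by rw [← c1, ← c2, tc])
    have e2 : e = e' := pinj (by rw [← x1, ← x2, tx])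
    have e3 : f + d = f' + d' := pinj (by rw [← ab1, ← ab2, tab])
    have e4 : max f d = max f' d' := pinj (by rw [← m1, ← m2, tm])
    simp only [Cond1] at h1 h1'
    omega
  · rintro d e f d' e' f' h1 h1' ⟨iso⟩
    obtain ⟨c1, x1, ab1, m1⟩ := M2_invs p d e f hp h1
    obtain ⟨c2, x2, ab2, m2⟩ := M2_invs p d' e' f' hp h1'
    obtain ⟨tc, tx, tab, tm⟩ := iso_transfer iso
    have e1 : d + e = d' + e' := pinj (by rw [← c1, ← c2, tc])
    have e2 : e = e' := pinj (by rw [← x1, ← x2, tx])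
    have e3 : f + e = f' + e' := pinj (by rw [← ab1, ← ab2, tab])
    omega
  · rintro d e h f d' e' h' f' h1 h1' ⟨iso⟩
    obtain ⟨c1, x1, ab1, m1⟩ := M3_invs p d e h f hp h1
    obtain ⟨c2, x2, ab2, m2⟩ := M3_invs p d' e' h' f' hp h1'
    obtain ⟨tc, tx, tab, tm⟩ := iso_transfer iso
    have e1 : h + (d + e - h) = h' + (d' + e' - h') := pinj (by rw [← c1, ← c2, tc])
    have e2 : e = e' := pinj (by rw [← x1, ← x2, tx])
    have e3 : f + (d + e - h) = f' + (d' + e' - h') := pinj (by rw [← ab1, ← ab2, tab])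
    have e4 : d + e - h = d' + e' - h' := pinj (by rw [← m1, ← m2, tm])
    simp only [Cond3] at h1 h1'
    omega
  · rintro d e f d' e' f' h1 h1' ⟨iso⟩
    obtain ⟨c1, x1, ab1, m1⟩ := M1_invs p d e f hp h1
    obtain ⟨c2, x2, ab2, m2⟩ := M2_invs p d' e' f' hp h1'
    obtain ⟨tc, tx, tab, tm⟩ := iso_transfer iso
    have e1 : e + d = d' + e' := pinj (by rw [← c1, ← c2, tc])
    have e2 : e = e' := pinj (by rw [← x1, ← x2, tx])
    have e3 : f + d = f' + e' := pinj (by rw [← ab1, ← ab2, tab])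
    have e4 : max f d = e' := pinj (by rw [← m1, ← m2, tm])
    simp only [Cond1] at h1
    simp only [Cond2] at h1'
    omega
  · rintro d e f d' e' h' f' h1 h1' ⟨iso⟩
    obtain ⟨c1, x1, ab1, m1⟩ := M1_invs p d e f hp h1
    obtain ⟨c2, x2, ab2, m2⟩ := M3_invs p d' e' h' f' hp h1'
    obtain ⟨tc, tx, tab, tm⟩ := iso_transfer iso
    have e1 : e + d = h' + (d' + e' - h') := pinj (by rw [← c1, ← c2, tc])
    have e2 : e = e' := pinj (by rw [← x1, ← x2, tx])
    have e3 : f + d = f' + (d' + e' - h') := pinj (by rw [← ab1, ← ab2, tab])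
    have e4 : max f d = d' + e' - h' := pinj (by rw [← m1, ← m2, tm])
    simp only [Cond1] at h1
    simp only [Cond3] at h1'
    omega
  · rintro d e f d' e' h' f' h1 h1' ⟨iso⟩
    obtain ⟨c1, x1, ab1, m1⟩ := M2_invs p d e f hp h1
    obtain ⟨c2, x2, ab2, m2⟩ := M3_invs p d' e' h' f' hp h1'
    obtain ⟨tc, tx, tab, tm⟩ := iso_transfer iso
    have e2 : e = e' := pinj (by rw [← x1, ← x2, tx])
    have e4 : e = d' + e' - h' := pinj (by rw [← m1, ← m2, tm])
    simp only [Cond2] at h1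
    simp only [Cond3] at h1'
    omega
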